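/- arXiv:2407.06609 — 2 statements merged into one kernel-verified Lean document; each statement's English description precedes it below -/
import Mathlib

section
/- Let V be a finite-dimensional real inner product space, let f : V ≃ V be a linear isometric equivalence of V, and let x be a real number with 0 < x < 1. Then the endomorphism E = id + (2x/(1-x)²)·(id - (1/2)·(f + f⁻¹)) has positive determinant and log det E = -2·(dim V)·log(1-x) - 2·∑_{k=1}^∞ (x^k / k)·tr(f^k), where tr(f^k) denotes the trace of the k-th iterate of the linear map underlying f and the series converges. -/
open scoped RealInnerProductSpace

section helpers

open Polynomial in
lemma aux_cheb {A : Type*} [Ring A] [Algebra ℝ A] (F G : A) (hFG : F * G = 1) (hGF : G * F = 1) :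
    ∀ k : ℕ, F ^ k + G ^ k =
      aeval ((1 / 2 : ℝ) • (F + G)) (2 * Chebyshev.T ℝ (k : ℤ)) := by
  have h2 : ∀ W : A, (2 : A) * ((1 / 2 : ℝ) • W) = W := by
    intro W
    rw [show (2 : A) = algebraMap ℝ A 2 from (map_ofNat _ 2).symm, ← Algebra.smul_def, smul_smul]
    norm_num
  have hX : aeval ((1 / 2 : ℝ) • (F + G)) ((2 : ℝ[X]) * X) = F + G := by
    rw [map_mul, aeval_X, map_ofNat, h2]
  intro k
  induction k using Nat.twoStepInduction with
  | zero =>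
      rw [show ((0 : ℕ) : ℤ) = 0 by norm_num, Chebyshev.T_zero, mul_one, map_ofNat]
      norm_num
  | one =>
      rw [pow_one, pow_one, show ((1 : ℕ) : ℤ) = 1 by norm_num, Chebyshev.T_one]
      exact hX.symm
  | more k ih1 ih2 =>
      rw [show ((k + 2 : ℕ) : ℤ) = (k : ℤ) + 2 by push_cast; ring, Chebyshev.T_add_two]
      have e1 : (2 : ℝ[X]) * (2 * X * Chebyshev.T ℝ ((k : ℤ) + 1) - Chebyshev.T ℝ (k : ℤ))
          = (2 * X) * (2 * Chebyshev.T ℝ ((k : ℤ) + 1)) - 2 * Chebyshev.T ℝ (k : ℤ) := by ring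
      rw [e1, map_sub, map_mul, hX]
      rw [show ((k : ℤ) + 1) = ((k + 1 : ℕ) : ℤ) by push_cast; ring]
      rw [← ih2, ← ih1]
      have h1 : F * G ^ (k + 1) = G ^ k := by rw [pow_succ', ← mul_assoc, hFG, one_mul]
      have h2' : G * F ^ (k + 1) = F ^ k := by rw [pow_succ', ← mul_assoc, hGF, one_mul]
      have expand : (F + G) * (F ^ (k + 1) + G ^ (k + 1))
          = F ^ (k + 2) + G ^ k + F ^ k + G ^ (k + 2) := by
        rw [add_mul, mul_add, mul_add, h1, h2', ← pow_succ', ← pow_succ']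
        abel
      rw [expand]
      abel

open Complex in
lemma aux_log_series (x θ : ℝ) (hx0 : 0 < x) (hx1 : x < 1) :
    HasSum (fun k : ℕ => x ^ (k + 1) / (k + 1) * Real.cos ((k + 1) * θ))
      (-(1 / 2) * Real.log (1 - 2 * x * Real.cos θ + x ^ 2)) := by
  set z : ℂ := (x : ℂ) * Complex.exp (θ * I) with hzdef
  have hnz : ‖z‖ < 1 := by
    rw [hzdef]
    simp only [norm_mul, Complex.norm_real, Real.norm_eq_abs, norm_exp_ofReal_mul_I, mul_one]
    rwa [abs_of_pos hx0]
  have h := Complex.hasSum_re (Complex.hasSum_taylorSeries_neg_log hnz)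
  rw [← hasSum_nat_add_iff' 1] at h
  have hterm : ∀ n : ℕ, (z ^ n / (n : ℂ)).re = x ^ n / n * Real.cos (n * θ) := by
    intro n
    have : z ^ n = ((x ^ n : ℝ) : ℂ) * Complex.exp ((n * θ : ℝ) * I) := by
      rw [hzdef, mul_pow, ← Complex.exp_nat_mul]
      push_cast
      ring_nf
    rw [this, show ((x ^ n : ℝ) : ℂ) * Complex.exp ((n * θ : ℝ) * I) / (n : ℂ)
        = ((x ^ n / n : ℝ) : ℂ) * Complex.exp ((n * θ : ℝ) * I) by push_cast; ring,
      re_ofReal_mul, exp_ofReal_mul_I_re]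
  have habs : ‖1 - z‖ ^ 2 = 1 - 2 * x * Real.cos θ + x ^ 2 := by
    rw [Complex.sq_norm, Complex.normSq_apply]
    have hre : (1 - z).re = 1 - x * Real.cos θ := by
      simp [hzdef, re_ofReal_mul, exp_ofReal_mul_I_re]
    have him : (1 - z).im = -(x * Real.sin θ) := by
      simp [hzdef, im_ofReal_mul, exp_ofReal_mul_I_im]
    rw [hre, him]
    have := Real.sin_sq_add_cos_sq θ
    nlinarith [this]
  have hqpos : (0 : ℝ) < 1 - 2 * x * Real.cos θ + x ^ 2 := by
    nlinarith [Real.neg_one_le_cos θ, Real.cos_le_one θ, sq_nonneg (1 - x)]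
  have habsne : ‖1 - z‖ ≠ 0 := by
    intro h0
    rw [h0] at habs
    simp at habs
    nlinarith
  have hsumval : (-Complex.log (1 - z)).re - ∑ i ∈ Finset.range 1, (z ^ i / (i : ℂ)).re
      = -(1 / 2) * Real.log (1 - 2 * x * Real.cos θ + x ^ 2) := by
    rw [Finset.sum_range_one]
    simp only [pow_zero, Nat.cast_zero, div_zero, Complex.zero_re, sub_zero]
    rw [Complex.neg_re, Complex.log_re, ← habs, Real.log_pow]
    push_cast
    ring
  rw [hsumval] at h
  convert h using 2 with k
  · rfl
  rw [hterm (k + 1)]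
  push_cast
  ring

lemma aux_trace_eq {V : Type*} [NormedAddCommGroup V] [InnerProductSpace ℝ V]
    [FiniteDimensional ℝ V] {n : ℕ} (b : OrthonormalBasis (Fin n) ℝ V) (g : V →ₗ[ℝ] V) :
    LinearMap.trace ℝ V g = ∑ i, inner ℝ (b i) (g (b i)) := by
  rw [LinearMap.trace_eq_matrix_trace ℝ b.toBasis, Matrix.trace]
  refine Finset.sum_congr rfl fun i _ => ?_
  rw [Matrix.diag_apply, LinearMap.toMatrix_apply, b.coe_toBasis, b.coe_toBasis_repr_apply,
    b.repr_apply_apply]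

lemma aux_trace_diag {V : Type*} [NormedAddCommGroup V] [InnerProductSpace ℝ V]
    [FiniteDimensional ℝ V] {n : ℕ} (b : OrthonormalBasis (Fin n) ℝ V) (c : Fin n → ℝ)
    (g : V →ₗ[ℝ] V) (h : ∀ i, g (b i) = c i • b i) :
    LinearMap.trace ℝ V g = ∑ i, c i := by
  rw [aux_trace_eq b g]
  refine Finset.sum_congr rfl fun i _ => ?_
  rw [h i, real_inner_smul_right, real_inner_self_eq_norm_mul_norm, b.orthonormal.1 i]
  ring

lemma aux_det_diag {V : Type*} [NormedAddCommGroup V] [InnerProductSpace ℝ V]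
    [FiniteDimensional ℝ V] {n : ℕ} (b : OrthonormalBasis (Fin n) ℝ V) (c : Fin n → ℝ)
    (g : V →ₗ[ℝ] V) (h : ∀ i, g (b i) = c i • b i) :
    LinearMap.det g = ∏ i, c i := by
  classical
  rw [← LinearMap.det_toMatrix b.toBasis]
  have hm : LinearMap.toMatrix b.toBasis b.toBasis g = Matrix.diagonal c := by
    ext i j
    rw [LinearMap.toMatrix_apply, b.coe_toBasis, h j, b.coe_toBasis_repr_apply, map_smul,
      b.repr_self]
    rcases eq_or_ne i j with rfl | hij
    · simp [Matrix.diagonal_apply_eq, EuclideanSpace.single_apply]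
    · simp [Matrix.diagonal_apply_ne _ hij, EuclideanSpace.single_apply, Ne.symm hij, hij]
  rw [hm, Matrix.det_diagonal]

end helpers

/-- Equation (3.15): for an isometric automorphism `f` of a finite-dimensional
real inner product space and `0 < x < 1`,
`log det(id + (2x/(1-x)²)(id - (f + f⁻¹)/2)) = -2·dim·log(1-x) - 2∑_{k≥1}(xᵏ/k)tr(fᵏ)`. -/
theorem stmt_7 (V : Type*) [NormedAddCommGroup V] [InnerProductSpace ℝ V]
    [FiniteDimensional ℝ V] (f : V ≃ₗᵢ[ℝ] V) (x : ℝ) (hx0 : 0 < x) (hx1 : x < 1)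
    (E : V →ₗ[ℝ] V)
    (hE : E = LinearMap.id + (2 * x / (1 - x) ^ 2) •
      (LinearMap.id - (1 / 2 : ℝ) •
        ((f.toLinearEquiv : V →ₗ[ℝ] V) + (f.symm.toLinearEquiv : V →ₗ[ℝ] V)))) :
    0 < LinearMap.det E ∧
    HasSum
      (fun k : ℕ => (x ^ (k + 1) / (k + 1)) *
        LinearMap.trace ℝ V ((f.toLinearEquiv : V →ₗ[ℝ] V) ^ (k + 1)))
      (-(Real.log (LinearMap.det E) +
          2 * (Module.finrank ℝ V) * Real.log (1 - x)) / 2) := by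
  classical
  have hx1' : (0 : ℝ) < 1 - x := by linarith
  set F : V →ₗ[ℝ] V := (f.toLinearEquiv : V →ₗ[ℝ] V) with hFdef
  set G : V →ₗ[ℝ] V := (f.symm.toLinearEquiv : V →ₗ[ℝ] V) with hGdef
  have hFapp : ∀ v, F v = f v := fun v => rfl
  have hGapp : ∀ v, G v = f.symm v := fun v => rfl
  have hFG : F * G = 1 := by
    ext v
    simp [Module.End.mul_apply, hFapp, hGapp]
  have hGF : G * F = 1 := by
    ext v
    simp [Module.End.mul_apply, hFapp, hGapp]
  have hadj : ∀ u v : V, ⟪F u, v⟫ = ⟪u, G v⟫ := by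
    intro u v
    rw [hFapp, hGapp, ← f.inner_map_map u (f.symm v), f.apply_symm_apply]
  have hadj' : ∀ u v : V, ⟪G u, v⟫ = ⟪u, F v⟫ := by
    intro u v
    rw [real_inner_comm, ← hadj v u, real_inner_comm]
  set S : V →ₗ[ℝ] V := (1 / 2 : ℝ) • (F + G) with hSdef
  have hS : S.IsSymmetric := by
    intro u v
    simp only [hSdef, LinearMap.smul_apply, LinearMap.add_apply, real_inner_smul_left,
      real_inner_smul_right, inner_add_left, inner_add_right, hadj, hadj']
    ring
  set d := Module.finrank ℝ V with hd
  let b : OrthonormalBasis (Fin d) ℝ V := hS.eigenvectorBasis rfl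
  let μ : Fin d → ℝ := hS.eigenvalues rfl
  have hb : ∀ i, S (b i) = μ i • b i := fun i =>
    hS.apply_eigenvectorBasis rfl i
  have hbn : ∀ i, ‖b i‖ = 1 := fun i => b.orthonormal.1 i
  have hbne : ∀ i, b i ≠ 0 := by
    intro i h0
    simpa [h0] using hbn i
  have hμ : ∀ i, |μ i| ≤ 1 := by
    intro i
    have hSle : ‖S (b i)‖ ≤ 1 := by
      have h1 : S (b i) = (1 / 2 : ℝ) • (F (b i) + G (b i)) := by
        simp [hSdef]
      rw [h1, norm_smul]
      have h2 : ‖F (b i)‖ = 1 := by rw [hFapp, f.norm_map, hbn i]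
      have h3 : ‖G (b i)‖ = 1 := by rw [hGapp, f.symm.norm_map, hbn i]
      calc ‖(1 / 2 : ℝ)‖ * ‖F (b i) + G (b i)‖
          ≤ ‖(1 / 2 : ℝ)‖ * (‖F (b i)‖ + ‖G (b i)‖) := by
            gcongr
            exact norm_add_le _ _
        _ = 1 := by rw [h2, h3]; norm_num
    rw [hb i, norm_smul, hbn i, mul_one, Real.norm_eq_abs] at hSle
    exact hSle
  have hμ1 : ∀ i, μ i ≤ 1 := fun i => (abs_le.1 (hμ i)).2
  have hμ2 : ∀ i, -1 ≤ μ i := fun i => (abs_le.1 (hμ i)).1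
  let θ : Fin d → ℝ := fun i => Real.arccos (μ i)
  have hcos : ∀ i, Real.cos (θ i) = μ i := fun i => Real.cos_arccos (hμ2 i) (hμ1 i)
  have hq : ∀ i, (0 : ℝ) < 1 - 2 * x * μ i + x ^ 2 := by
    intro i
    nlinarith [hμ1 i, sq_nonneg (1 - x)]
  -- determinant
  have hEdiag : ∀ i, E (b i) = ((1 - 2 * x * μ i + x ^ 2) / (1 - x) ^ 2) • b i := by
    intro i
    rw [hE]
    simp only [LinearMap.add_apply, LinearMap.smul_apply, LinearMap.sub_apply,
      LinearMap.id_apply, hb i]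
    have hsc : (1 - 2 * x * μ i + x ^ 2) / (1 - x) ^ 2
        = 1 + (2 * x / (1 - x) ^ 2) * (1 - μ i) := by
      field_simp
      ring
    rw [hsc]
    module
  have hdet : LinearMap.det E = ∏ i, (1 - 2 * x * μ i + x ^ 2) / (1 - x) ^ 2 :=
    aux_det_diag b _ E hEdiag
  have hdpos : 0 < LinearMap.det E := by
    rw [hdet]
    exact Finset.prod_pos fun i _ => div_pos (hq i) (by positivity)
  refine ⟨hdpos, ?_⟩
  -- trace identities
  have hFGinner : ∀ (m : ℕ) (u w : V), ⟪(F ^ m) u, w⟫ = ⟪u, (G ^ m) w⟫ := by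
    intro m
    induction m with
    | zero => intro u w; simp
    | succ m ih =>
        intro u w
        rw [pow_succ' F m, Module.End.mul_apply, hadj, ih, pow_succ G m, Module.End.mul_apply]
  have htrFG : ∀ m : ℕ, LinearMap.trace ℝ V (G ^ m) = LinearMap.trace ℝ V (F ^ m) := by
    intro m
    rw [aux_trace_eq b, aux_trace_eq b]
    refine Finset.sum_congr rfl fun i _ => ?_
    rw [← hFGinner m (b i) (b i), real_inner_comm]
  have htrace : ∀ m : ℕ,
      LinearMap.trace ℝ V (F ^ (m + 1)) = ∑ i, Real.cos (((m : ℝ) + 1) * θ i) := by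
    intro m
    have hcheb := aux_cheb F G hFG hGF (m + 1)
    have heig : ∀ i,
        (Polynomial.aeval S (2 * Polynomial.Chebyshev.T ℝ ((m + 1 : ℕ) : ℤ))) (b i)
        = ((2 * Polynomial.Chebyshev.T ℝ ((m + 1 : ℕ) : ℤ)).eval (μ i)) • b i := by
      intro i
      exact Module.End.aeval_apply_of_hasEigenvector
        ⟨Module.End.mem_eigenspace_iff.2 (hb i), hbne i⟩
    have htr2 := aux_trace_diag b _ _ heig
    have hadd : LinearMap.trace ℝ V (F ^ (m + 1)) + LinearMap.trace ℝ V (G ^ (m + 1))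
        = ∑ i, (2 * Polynomial.Chebyshev.T ℝ ((m + 1 : ℕ) : ℤ)).eval (μ i) := by
      rw [← map_add, hcheb, htr2]
    have heval : ∀ i, (2 * Polynomial.Chebyshev.T ℝ ((m + 1 : ℕ) : ℤ)).eval (μ i)
        = 2 * Real.cos (((m : ℝ) + 1) * θ i) := by
      intro i
      rw [Polynomial.eval_mul, Polynomial.eval_ofNat, ← hcos i,
        Polynomial.Chebyshev.T_real_cos]
      push_cast
      ring_nf
    rw [htrFG (m + 1)] at hadd
    have hsum2 : ∑ i, (2 * Polynomial.Chebyshev.T ℝ ((m + 1 : ℕ) : ℤ)).eval (μ i)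
        = 2 * ∑ i, Real.cos (((m : ℝ) + 1) * θ i) := by
      rw [Finset.mul_sum]
      exact Finset.sum_congr rfl fun i _ => heval i
    rw [hsum2] at hadd
    linarith
  -- series
  have hseries : ∀ i, HasSum (fun k : ℕ => x ^ (k + 1) / (k + 1) * Real.cos ((k + 1) * θ i))
      (-(1 / 2) * Real.log (1 - 2 * x * μ i + x ^ 2)) := by
    intro i
    have h := aux_log_series x (θ i) hx0 hx1
    rwa [hcos i] at h
  have hsum : HasSum
      (fun k : ℕ => ∑ i, x ^ (k + 1) / (k + 1) * Real.cos ((k + 1) * θ i))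
      (∑ i, -(1 / 2) * Real.log (1 - 2 * x * μ i + x ^ 2)) :=
    hasSum_sum fun i _ => hseries i
  have hfun : (fun k : ℕ => (x ^ (k + 1) / (k + 1)) * LinearMap.trace ℝ V (F ^ (k + 1)))
      = fun k : ℕ => ∑ i, x ^ (k + 1) / (k + 1) * Real.cos ((k + 1) * θ i) := by
    funext k
    rw [htrace k, Finset.mul_sum]
  rw [hfun]
  have hval : -(Real.log (LinearMap.det E) + 2 * (d : ℝ) * Real.log (1 - x)) / 2
      = ∑ i, -(1 / 2) * Real.log (1 - 2 * x * μ i + x ^ 2) := by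
    rw [hdet, Real.log_prod (fun i _ => ne_of_gt (div_pos (hq i) (by positivity)))]
    have hlog : ∀ i, Real.log ((1 - 2 * x * μ i + x ^ 2) / (1 - x) ^ 2)
        = Real.log (1 - 2 * x * μ i + x ^ 2) - 2 * Real.log (1 - x) := by
      intro i
      rw [Real.log_div (ne_of_gt (hq i)) (by positivity), Real.log_pow]
      push_cast
      ring
    rw [Finset.sum_congr rfl fun i _ => hlog i, Finset.sum_sub_distrib,
      Finset.sum_const, Finset.card_univ, Fintype.card_fin, ← Finset.mul_sum,
      nsmul_eq_mul]
    ring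
  rw [hval]
  exact hsum
end

section
/- Let a > 0 and t > 0, and let s be a complex number with Re s > 1/2. Then t^{-2s} + 2·∑_{k=1}^∞ ((2πk/a)² + t²)^{-s} = (a·Γ(s - 1/2)/(2√π·Γ(s)))·t^{1-2s} + (a/(√π·Γ(s)))·∑_{k=1}^∞ ∫_0^∞ u^{s-3/2}·exp(-(u·t² + a²k²/(4u))) du, where all series and integrals converge. -/
open Real MeasureTheory Set

namespace SZ







lemma cpow_two_mul {x : ℝ} (hx : 0 < x) (w : ℂ) :
    (x:ℂ) ^ (2 * w) = (((x^2 : ℝ)):ℂ) ^ w := by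
  have hlog : (Complex.log (x:ℂ)).im = 0 := by
    rw [← Complex.ofReal_log hx.le]; simp
  rw [Complex.cpow_mul]
  · congr 1
    rw [show ((2:ℂ)) = ((2:ℕ):ℂ) by norm_num, Complex.cpow_natCast]
    push_cast; ring
  · simp [hlog, Real.pi_pos]
  · simp [hlog, Real.pi_pos.le]

lemma summable_exp_sq {c : ℝ} (hc : 0 < c) :
    Summable (fun n : ℕ => rexp (-(c * ((n:ℝ)+1)^2))) := by
  have h : Summable (fun n : ℕ => rexp (-c) * rexp (-c) ^ n) :=
    (summable_geometric_of_lt_one (Real.exp_nonneg _)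
      (Real.exp_lt_one_iff.mpr (by linarith))).mul_left _
  refine h.of_nonneg_of_le (fun n => Real.exp_nonneg _) (fun n => ?_)
  rw [← Real.exp_nat_mul, ← Real.exp_add]
  apply Real.exp_le_exp.mpr
  have h0 : (0:ℝ) ≤ (n:ℝ) := Nat.cast_nonneg n
  nlinarith [mul_nonneg hc.le (mul_nonneg h0 h0), mul_nonneg hc.le h0]

lemma summable_exp_sq_nat {c : ℝ} (hc : 0 < c) :
    Summable (fun n : ℕ => rexp (-(c * (n:ℝ)^2))) := by
  rw [← summable_nat_add_iff 1]
  simpa using summable_exp_sq hc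

lemma theta_split {c : ℝ} (hc : 0 < c) :
    ∑' n : ℤ, rexp (-(c * (n:ℝ)^2)) = 1 + 2 * ∑' k : ℕ, rexp (-(c * ((k:ℝ)+1)^2)) := by
  set f : ℤ → ℝ := fun n => rexp (-(c * (n:ℝ)^2)) with hf
  have h1 : Summable (fun n : ℕ => f n) := by
    refine (summable_exp_sq_nat hc).congr fun n => ?_
    simp [hf]
  have h2 : Summable (fun n : ℕ => f (-((n:ℤ) + 1))) := by
    refine (summable_exp_sq hc).congr fun n => ?_
    simp only [hf]
    push_cast
    ring_nf
  rw [tsum_of_nat_of_neg_add_one h1 h2, Summable.tsum_eq_zero_add h1]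
  have e2 : ∑' n : ℕ, f (-((n:ℤ) + 1)) = ∑' k : ℕ, rexp (-(c * ((k:ℝ)+1)^2)) := by
    refine tsum_congr fun n => ?_
    simp only [hf]; push_cast; ring_nf
  have e1 : ∑' n : ℕ, f ((n:ℤ) + 1) = ∑' k : ℕ, rexp (-(c * ((k:ℝ)+1)^2)) := by
    refine tsum_congr fun n => ?_
    simp only [hf]; push_cast; ring_nf
  have e0 : f ((0:ℕ):ℤ) = 1 := by simp [hf]
  rw [e2, e0]
  have : (fun n : ℕ => f ((n:ℕ) + 1 : ℕ)) = fun n : ℕ => f ((n:ℤ) + 1) := by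
    funext n; push_cast; rfl
  rw [this, e1]
  ring









lemma poisson {a u : ℝ} (ha : 0 < a) (hu : 0 < u) :
    ∑' n : ℤ, rexp (-((2*π/a)^2 * u * (n:ℝ)^2)) =
      a/(2*Real.sqrt π*Real.sqrt u) * ∑' n : ℤ, rexp (-(a^2*(n:ℝ)^2/(4*u))) := by
  have hπ := Real.pi_pos
  have ha' : (0:ℝ) < 4*π*u/a^2 := by positivity
  have := Real.tsum_exp_neg_mul_int_sq ha'
  have e1 : ∀ n : ℤ, -π * (4*π*u/a^2) * (n:ℝ)^2 = -((2*π/a)^2 * u * (n:ℝ)^2) := by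
    intro n; field_simp; ring_nf
  have e2 : ∀ n : ℤ, -π / (4*π*u/a^2) * (n:ℝ)^2 = -(a^2*(n:ℝ)^2/(4*u)) := by
    intro n; field_simp
  simp_rw [e1, e2] at this
  rw [this]
  congr 1
  rw [← Real.sqrt_eq_rpow]
  have hsq : (2*Real.sqrt π*Real.sqrt u/a)^2 = 4*π*u/a^2 := by
    rw [div_pow, mul_pow, mul_pow, sq_sqrt hπ.le, sq_sqrt hu.le]; ring
  rw [← hsq, Real.sqrt_sq (by positivity), one_div_div]

lemma norm_cpow_exp {u : ℝ} (hu : 0 < u) (w : ℂ) (x : ℝ) :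
    ‖(u:ℂ) ^ w * ((rexp x : ℝ) : ℂ)‖ = u ^ w.re * rexp x := by
  rw [norm_mul,
    Complex.norm_cpow_eq_rpow_re_of_pos hu, Complex.norm_real, Real.norm_eq_abs, abs_of_pos (Real.exp_pos x)]

lemma aux_int {q b : ℝ} (hq : -1 < q) (hb : 0 < b) :
    IntegrableOn (fun u : ℝ => u ^ q * rexp (-(b*u))) (Set.Ioi 0) := by
  have := integrableOn_rpow_mul_exp_neg_mul_rpow hq zero_lt_one hb
  simpa [neg_mul] using this

lemma aesm_cpow_exp (w : ℂ) (E : ℝ → ℝ) (hE : ContinuousOn E (Set.Ioi 0)) :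
    AEStronglyMeasurable (fun u : ℝ => (u:ℂ) ^ w * ((rexp (E u) : ℝ) : ℂ))
      (volume.restrict (Set.Ioi 0)) := by
  refine ContinuousOn.aestronglyMeasurable ?_ measurableSet_Ioi
  refine ContinuousOn.mul ?_ ?_
  · intro x hx
    exact (Complex.continuousAt_ofReal_cpow_const x w
      (Or.inr (ne_of_gt hx))).continuousWithinAt
  · exact Complex.continuous_ofReal.comp_continuousOn
      (Real.continuous_exp.comp_continuousOn hE)

lemma integrable_cpow_exp {w : ℂ} (hw : -1 < w.re) {b : ℝ} (hb : 0 < b) :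
    IntegrableOn (fun u : ℝ => (u:ℂ) ^ w * ((rexp (-(b*u)) : ℝ) : ℂ)) (Set.Ioi 0) := by
  refine Integrable.mono' (aux_int hw hb) ?_ ?_
  · exact aesm_cpow_exp w _ ((continuous_const.mul continuous_id).neg).continuousOn
  · filter_upwards [ae_restrict_mem measurableSet_Ioi] with u hu
    rw [norm_cpow_exp hu]

lemma mellin_eval {w : ℂ} (hw : 0 < w.re) {b : ℝ} (hb : 0 < b) :
    ∫ u in Set.Ioi (0:ℝ), (u:ℂ) ^ (w-1) * ((rexp (-(b*u)) : ℝ) : ℂ)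
      = (1/(b:ℂ)) ^ w * Complex.Gamma w := by
  rw [← Complex.integral_cpow_mul_exp_neg_mul_Ioi hw hb]
  refine setIntegral_congr_fun measurableSet_Ioi fun u hu => ?_
  push_cast [Complex.ofReal_exp]
  ring_nf

lemma mellin_norm {q b : ℝ} (hq : 0 < q) (hb : 0 < b) :
    ∫ u in Set.Ioi (0:ℝ), u ^ (q-1) * rexp (-(b*u)) = (1/b) ^ q * Real.Gamma q := by
  rw [← Real.integral_rpow_mul_exp_neg_mul_Ioi hq hb]









-- summability of (1/(t² + B n²))^r over ℕ shifted
lemma core_nat {B t r : ℝ} (hB : 0 < B) (ht : 0 < t) (hr : 1/2 < r) :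
    Summable (fun k : ℕ => (1/(t^2 + B*((k:ℝ)+1)^2))^r) := by
  have hr0 : (0:ℝ) < r := by linarith
  have hsum : Summable (fun k : ℕ => (1/B)^r * ((k:ℝ)+1)^(-(2*r))) := by
    have h1 : Summable (fun n : ℕ => (n:ℝ)^(-(2*r))) :=
      Real.summable_nat_rpow.mpr (by linarith)
    have h2 := (summable_nat_add_iff 1).mpr h1
    refine (h2.congr fun k => ?_).mul_left _
    push_cast; ring_nf
  refine hsum.of_nonneg_of_le (fun k => by positivity) (fun k => ?_)
  set m : ℝ := (k:ℝ)+1 with hm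
  have hm1 : (1:ℝ) ≤ m := by have := Nat.cast_nonneg (α:=ℝ) k; linarith [hm]
  have hm0 : (0:ℝ) < m := by linarith
  have hb1 : (1:ℝ)/(t^2+B*m^2) ≤ 1/(B*m^2) := by
    apply one_div_le_one_div_of_le (by positivity)
    nlinarith
  calc (1/(t^2+B*m^2))^r ≤ (1/(B*m^2))^r :=
        Real.rpow_le_rpow (by positivity) hb1 hr0.le
    _ = (1/B)^r * m^(-(2*r)) := by
        rw [show (1:ℝ)/(B*m^2) = (1/B) * (1/m^2) by field_simp]
        rw [Real.mul_rpow (by positivity) (by positivity)]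
        congr 1
        rw [show (1:ℝ)/m^2 = m^(-2:ℝ) by
          rw [Real.rpow_neg hm0.le, one_div, ← Real.rpow_natCast m 2]
          norm_num]
        rw [← Real.rpow_mul hm0.le]
        ring_nf

-- Conjunct 1
lemma conj1 {a t : ℝ} (ha : 0 < a) (ht : 0 < t) {s : ℂ} (hs : 1/2 < s.re) :
    Summable (fun k : ℕ => ((((2 * π * ((k : ℝ) + 1) / a) ^ 2 + t ^ 2 : ℝ) : ℂ)) ^ (-s)) := by
  have hπ := Real.pi_pos
  have hB : (0:ℝ) < (2*π/a)^2 := by positivity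
  refine Summable.of_norm ?_
  refine (core_nat hB ht hs).congr fun k => ?_
  have hpos : (0:ℝ) < (2 * π * ((k:ℝ)+1)/a)^2 + t^2 := by positivity
  rw [Complex.norm_cpow_eq_rpow_re_of_pos hpos, Complex.neg_re]
  rw [Real.rpow_neg hpos.le, ← Real.inv_rpow hpos.le, ← one_div]
  congr 2
  field_simp
  ring









variable {a t : ℝ} {s : ℂ}

lemma H_cont (t c : ℝ) : ContinuousOn (fun u : ℝ => -(u*t^2 + c/(4*u))) (Set.Ioi 0) := by
  refine ContinuousOn.neg (ContinuousOn.add (by fun_prop) ?_)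
  exact ContinuousOn.div continuousOn_const (by fun_prop)
    (fun u hu => by simp only [mem_Ioi] at hu; positivity)

lemma H_aesm (s : ℂ) (t c : ℝ) :
    AEStronglyMeasurable
      (fun u : ℝ => (u:ℂ) ^ (s - 3/2) * ((rexp (-(u*t^2 + c/(4*u))) : ℝ) : ℂ))
      (volume.restrict (Set.Ioi 0)) :=
  aesm_cpow_exp _ _ (H_cont t c)

lemma H_int (ht : 0 < t) (hs : 1/2 < s.re) {c : ℝ} (hc : 0 ≤ c) :
    IntegrableOn
      (fun u : ℝ => (u:ℂ) ^ (s - 3/2) * ((rexp (-(u*t^2 + c/(4*u))) : ℝ) : ℂ))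
      (Set.Ioi 0) := by
  have hq : (-1:ℝ) < (s - 3/2).re := by
    simp only [Complex.sub_re, Complex.div_re]
    norm_num
    linarith
  refine Integrable.mono' (aux_int hq (show (0:ℝ) < t^2 by positivity)) (H_aesm s t c) ?_
  filter_upwards [ae_restrict_mem measurableSet_Ioi] with u hu
  simp only [mem_Ioi] at hu
  rw [norm_cpow_exp hu]
  have h1 : rexp (-(u*t^2 + c/(4*u))) ≤ rexp (-(t^2*u)) := by
    apply Real.exp_le_exp.mpr
    have : 0 ≤ c/(4*u) := by positivity
    nlinarith
  have h2 : (0:ℝ) ≤ u ^ (s-3/2).re := Real.rpow_nonneg hu.le _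
  exact mul_le_mul_of_nonneg_left h1 h2

lemma H_norm_integral_le (ha : 0 < a) (ht : 0 < t) (hs : 1/2 < s.re) {m : ℝ} (hm : 0 < m) :
    ∫ u in Set.Ioi (0:ℝ),
        ‖(u:ℂ) ^ (s - 3/2) * ((rexp (-(u*t^2 + a^2*m^2/(4*u))) : ℝ) : ℂ)‖
      ≤ rexp (-(a*m*t/2)) *
        ∫ u in Set.Ioi (0:ℝ), u ^ ((s-3/2).re) * rexp (-(t^2/2*u)) := by
  have hq : (-1:ℝ) < (s - 3/2).re := by
    simp only [Complex.sub_re, Complex.div_re]; norm_num; linarith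
  have hmaj := aux_int hq (show (0:ℝ) < t^2/2 by positivity)
  have hint := H_int ht hs (c := a^2*m^2) (by positivity) (s := s)
  rw [← integral_const_mul]
  refine setIntegral_mono_on hint.norm (hmaj.const_mul _) measurableSet_Ioi ?_
  intro u hu
  simp only [mem_Ioi] at hu
  rw [norm_cpow_exp hu]
  have key : rexp (-(u*t^2 + a^2*m^2/(4*u))) ≤ rexp (-(a*m*t/2)) * rexp (-(t^2/2*u)) := by
    rw [← Real.exp_add]
    apply Real.exp_le_exp.mpr
    have hineq : a*m*t/2 + t^2/2*u ≤ u*t^2 + a^2*m^2/(4*u) := by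
      rw [← sub_nonneg]
      have heq : u*t^2 + a^2*m^2/(4*u) - (a*m*t/2 + t^2/2*u)
          = (t^2*u^2 + (u*t - a*m)^2)/(4*u) := by
        field_simp; ring
      rw [heq]; positivity
    linarith
  calc u ^ (s-3/2).re * rexp (-(u*t^2 + a^2*m^2/(4*u)))
      ≤ u ^ (s-3/2).re * (rexp (-(a*m*t/2)) * rexp (-(t^2/2*u))) :=
        mul_le_mul_of_nonneg_left key (Real.rpow_nonneg hu.le _)
    _ = rexp (-(a*m*t/2)) * (u ^ (s-3/2).re * rexp (-(t^2/2*u))) := by ring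



lemma int_even_split {f : ℤ → ℂ} (hf : ∀ n : ℤ, f (-n) = f n) (hZ : Summable f) :
    ∑' n : ℤ, f n = f 0 + 2 * ∑' k : ℕ, f ((k:ℤ)+1) := by
  have h1 : Summable (fun n : ℕ => f n) := hZ.comp_injective (fun x y h => by exact_mod_cast h)
  have h1' : Summable (fun n : ℕ => f ((n:ℤ)+1)) := by
    refine ((summable_nat_add_iff 1).mpr h1).congr fun n => ?_
    push_cast; rfl
  have h2 : Summable (fun n : ℕ => f (-((n:ℤ)+1))) := h1'.congr fun n => (hf _).symm
  rw [tsum_of_nat_of_neg_add_one h1 h2, Summable.tsum_eq_zero_add h1]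
  have e2 : ∑' n : ℕ, f (-((n:ℤ)+1)) = ∑' n : ℕ, f ((n:ℤ)+1) := tsum_congr fun n => hf _
  have e1 : ∑' n : ℕ, f (((n+1:ℕ)):ℤ) = ∑' n : ℕ, f ((n:ℤ)+1) := by
    refine tsum_congr fun n => ?_; push_cast; rfl
  rw [e2]
  push_cast
  push_cast at e1
  rw [e1]
  ring

lemma core_int {B t r : ℝ} (hB : 0 < B) (ht : 0 < t) (hr : 1/2 < r) :
    Summable (fun n : ℤ => (1/(t^2 + B*(n:ℝ)^2))^r) := by
  have hnat : Summable (fun n : ℕ => (1/(t^2 + B*(n:ℝ)^2))^r) := by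
    rw [← summable_nat_add_iff 1]
    refine (core_nat hB ht hr).congr fun k => ?_
    push_cast; ring_nf
  exact Summable.of_nat_of_neg (hnat.congr fun n => by push_cast; ring_nf)
    (hnat.congr fun n => by push_cast; ring_nf)

lemma integrable_cpow_exp' {w : ℂ} (hw : -1 < w.re) {b : ℝ} (hb : 0 < b) :
    IntegrableOn (fun u : ℝ => (u:ℂ) ^ w * ((rexp (-(b*u)) : ℝ) : ℂ)) (Set.Ioi 0) :=
  integrable_cpow_exp hw hb

lemma G_norm_integral {a t : ℝ} (ha : 0 < a) (ht : 0 < t) {s : ℂ} (hs : 1/2 < s.re) (n : ℤ) :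
    ∫ u in Set.Ioi (0:ℝ),
        ‖(u:ℂ) ^ (s-1) * ((rexp (-((t^2+(2*π/a)^2*(n:ℝ)^2)*u)) : ℝ) : ℂ)‖
      = (1/(t^2+(2*π/a)^2*(n:ℝ)^2))^s.re * Real.Gamma s.re := by
  have hπ := Real.pi_pos
  have hb : (0:ℝ) < t^2+(2*π/a)^2*(n:ℝ)^2 := by positivity
  rw [← mellin_norm (lt_trans (by norm_num) hs) hb]
  refine setIntegral_congr_fun measurableSet_Ioi fun u hu => ?_
  rw [norm_cpow_exp hu, Complex.sub_re, Complex.one_re]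

lemma G_summable_norm {a t : ℝ} (ha : 0 < a) (ht : 0 < t) {s : ℂ} (hs : 1/2 < s.re) :
    Summable (fun n : ℤ => ∫ u in Set.Ioi (0:ℝ),
        ‖(u:ℂ) ^ (s-1) * ((rexp (-((t^2+(2*π/a)^2*(n:ℝ)^2)*u)) : ℝ) : ℂ)‖) := by
  have hπ := Real.pi_pos
  have hB : (0:ℝ) < (2*π/a)^2 := by positivity
  refine ((core_int hB ht hs).mul_right (Real.Gamma s.re)).congr fun n => ?_
  exact (G_norm_integral ha ht hs n).symm

lemma G_value {a t : ℝ} (ha : 0 < a) (ht : 0 < t) {s : ℂ} (hs : 1/2 < s.re) (n : ℤ) :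
    ∫ u in Set.Ioi (0:ℝ),
        (u:ℂ) ^ (s-1) * ((rexp (-((t^2+(2*π/a)^2*(n:ℝ)^2)*u)) : ℝ) : ℂ)
      = (1/(((t^2+(2*π/a)^2*(n:ℝ)^2 : ℝ)):ℂ))^s * Complex.Gamma s := by
  have hπ := Real.pi_pos
  have hb : (0:ℝ) < t^2+(2*π/a)^2*(n:ℝ)^2 := by positivity
  have := mellin_eval (w := s) (lt_trans (by norm_num) hs) hb
  rw [← this]

lemma hpow_sqrt {u : ℝ} (hu : 0 < u) (s : ℂ) :
    (u:ℂ)^(s-1) = (u:ℂ)^(s-3/2) * ((Real.sqrt u : ℝ):ℂ) := by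
  rw [show (s-1 : ℂ) = (s-3/2) + 1/2 by ring,
    Complex.cpow_add _ _ (Complex.ofReal_ne_zero.mpr hu.ne')]
  congr 1
  rw [show ((1:ℂ)/2) = ((1/2:ℝ):ℂ) by norm_num, ← Complex.ofReal_cpow hu.le,
    ← Real.sqrt_eq_rpow]

lemma pointwise {a t : ℝ} (ha : 0 < a) (ht : 0 < t) (s : ℂ) {u : ℝ} (hu : 0 < u) :
    ∑' n : ℤ, (u:ℂ)^(s-1) * ((rexp (-((t^2+(2*π/a)^2*(n:ℝ)^2)*u)) : ℝ):ℂ)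
      = ((a/(2*Real.sqrt π) : ℝ):ℂ) *
        ∑' n : ℤ, (u:ℂ)^(s-3/2) * ((rexp (-(u*t^2 + a^2*(n:ℝ)^2/(4*u))) : ℝ):ℂ) := by
  have hπ := Real.pi_pos
  have hsu : Real.sqrt u ≠ 0 := by positivity
  have hsπ : Real.sqrt π ≠ 0 := by positivity
  have lhs_eq : ∑' n : ℤ, (u:ℂ)^(s-1) * ((rexp (-((t^2+(2*π/a)^2*(n:ℝ)^2)*u)) : ℝ):ℂ)
      = ((u:ℂ)^(s-1) * ((rexp (-(t^2*u)) : ℝ):ℂ)) *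
        ((∑' n : ℤ, rexp (-((2*π/a)^2*u*(n:ℝ)^2)) : ℝ):ℂ) := by
    rw [Complex.ofReal_tsum, ← tsum_mul_left]
    refine tsum_congr fun n => ?_
    rw [show -((t^2+(2*π/a)^2*(n:ℝ)^2)*u) = -(t^2*u) + -((2*π/a)^2*u*(n:ℝ)^2) by ring,
      Real.exp_add]
    push_cast
    ring
  have rhs_eq : ∑' n : ℤ, (u:ℂ)^(s-3/2) * ((rexp (-(u*t^2 + a^2*(n:ℝ)^2/(4*u))) : ℝ):ℂ)
      = ((u:ℂ)^(s-3/2) * ((rexp (-(u*t^2)) : ℝ):ℂ)) *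
        ((∑' n : ℤ, rexp (-(a^2*(n:ℝ)^2/(4*u))) : ℝ):ℂ) := by
    rw [Complex.ofReal_tsum, ← tsum_mul_left]
    refine tsum_congr fun n => ?_
    rw [show -(u*t^2 + a^2*(n:ℝ)^2/(4*u)) = -(u*t^2) + -(a^2*(n:ℝ)^2/(4*u)) by ring,
      Real.exp_add]
    push_cast
    ring
  have hsu' : ((Real.sqrt u:ℝ):ℂ) ≠ 0 := Complex.ofReal_ne_zero.mpr hsu
  have hsπ' : ((Real.sqrt π:ℝ):ℂ) ≠ 0 := Complex.ofReal_ne_zero.mpr hsπ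
  rw [lhs_eq, rhs_eq, poisson ha hu, hpow_sqrt hu s,
    show -(t^2*u) = -(u*t^2) by ring]
  push_cast
  field_simp

lemma geom_aux {a t : ℝ} (ha : 0 < a) (ht : 0 < t) (C : ℝ) :
    Summable (fun k : ℕ => rexp (-(a*((k:ℝ)+1)*t/2)) * C) := by
  have hq1 : rexp (-(a*t/2)) < 1 := Real.exp_lt_one_iff.mpr (by nlinarith)
  refine ((((summable_geometric_of_lt_one (Real.exp_nonneg _) hq1).mul_left
    (rexp (-(a*t/2)))).mul_right C)).congr fun k => ?_
  rw [← Real.exp_nat_mul, ← Real.exp_add]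
  congr 2
  push_cast; ring

lemma conj3 {a t : ℝ} (ha : 0 < a) (ht : 0 < t) {s : ℂ} (hs : 1/2 < s.re) :
    Summable (fun k : ℕ => ∫ u in Set.Ioi (0:ℝ), (u:ℂ) ^ (s - 3/2) *
      ((rexp (-(u * t^2 + a^2*((k:ℝ)+1)^2/(4*u))) : ℝ) : ℂ)) := by
  refine Summable.of_norm_bounded
    (geom_aux ha ht (∫ u in Set.Ioi (0:ℝ), u ^ ((s-3/2).re) * rexp (-(t^2/2*u))))
    fun k => ?_
  refine (norm_integral_le_integral_norm _).trans ?_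
  exact H_norm_integral_le ha ht hs (by positivity : (0:ℝ) < (k:ℝ)+1)

lemma summable_int_even {f : ℤ → ℝ} (heven : ∀ n, f (-n) = f n)
    (h : Summable fun n : ℕ => f n) : Summable f :=
  Summable.of_nat_of_neg h (h.congr fun n => (heven n).symm)

lemma H_summable_norm {a t : ℝ} (ha : 0 < a) (ht : 0 < t) {s : ℂ} (hs : 1/2 < s.re) :
    Summable (fun n : ℤ => ∫ u in Set.Ioi (0:ℝ),
      ‖(u:ℂ) ^ (s - 3/2) * ((rexp (-(u * t^2 + a^2*(n:ℝ)^2/(4*u))) : ℝ) : ℂ)‖) := by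
  have hnat : Summable (fun n : ℕ => ∫ u in Set.Ioi (0:ℝ),
      ‖(u:ℂ) ^ (s - 3/2) * ((rexp (-(u * t^2 + a^2*(n:ℝ)^2/(4*u))) : ℝ) : ℂ)‖) := by
    rw [← summable_nat_add_iff 1]
    refine (geom_aux ha ht
      (∫ u in Set.Ioi (0:ℝ), u ^ ((s-3/2).re) * rexp (-(t^2/2*u)))).of_nonneg_of_le
      (fun k => integral_nonneg fun u => norm_nonneg _) fun k => ?_
    have hc : ((k+1:ℕ):ℝ) = (k:ℝ)+1 := by push_cast; ring
    rw [hc]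
    exact H_norm_integral_le ha ht hs (by positivity : (0:ℝ) < (k:ℝ)+1)
  refine summable_int_even (fun n => by simp only [Int.cast_neg, neg_sq]) ?_
  refine hnat.congr fun n => ?_
  norm_num

lemma one_div_sq_cpow {t : ℝ} (ht : 0 < t) (w : ℂ) :
    (1/(((t^2 : ℝ)):ℂ))^w = (t:ℂ) ^ (2 * -w) := by
  have ht2 : (0:ℝ) < t^2 := by positivity
  have harg : (((t^2:ℝ)):ℂ).arg ≠ π := by
    rw [Complex.arg_ofReal_of_nonneg ht2.le]
    exact Real.pi_ne_zero.symm
  rw [cpow_two_mul ht (-w), one_div, Complex.inv_cpow _ _ harg, ← Complex.cpow_neg]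

lemma H_value0 {a t : ℝ} (ht : 0 < t) {s : ℂ} (hs : 1/2 < s.re) :
    ∫ u in Set.Ioi (0:ℝ), (u:ℂ) ^ (s - 3/2) *
        ((rexp (-(u * t^2 + a^2*((0:ℝ))^2/(4*u))) : ℝ) : ℂ)
      = (1/(((t^2 : ℝ)):ℂ))^(s - 1/2) * Complex.Gamma (s - 1/2) := by
  have hw : 0 < (s - 1/2 : ℂ).re := by
    simp only [Complex.sub_re, Complex.div_re]
    norm_num; linarith
  have hb : (0:ℝ) < t^2 := by positivity
  rw [← mellin_eval hw hb]
  refine setIntegral_congr_fun measurableSet_Ioi fun u hu => ?_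
  rw [show (s - 1/2 - 1 : ℂ) = s - 3/2 by ring]
  congr 3
  ring

lemma one_div_cpow {x : ℝ} (hx : 0 < x) (w : ℂ) :
    (1/((x : ℝ):ℂ))^w = ((x : ℝ):ℂ)^(-w) := by
  have harg : ((x:ℝ):ℂ).arg ≠ π := by
    rw [Complex.arg_ofReal_of_nonneg hx.le]
    exact Real.pi_ne_zero.symm
  rw [one_div, Complex.inv_cpow _ _ harg, ← Complex.cpow_neg]

end SZ

/-- The intermediate representation of the spectral zeta function of
`Δ_{S¹(a/2π)} + t²` in the proof of Lemma 3.3, obtained from the Mellin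
representation and Poisson summation. -/
theorem stmt_13 (a t : ℝ) (ha : 0 < a) (ht : 0 < t) (s : ℂ) (hs : 1 / 2 < s.re) :
    Summable
      (fun k : ℕ => ((((2 * π * ((k : ℝ) + 1) / a) ^ 2 + t ^ 2 : ℝ) : ℂ)) ^ (-s)) ∧
    (∀ k : ℕ, IntegrableOn
      (fun u : ℝ => (u : ℂ) ^ (s - 3 / 2) *
        (Real.exp (-(u * t ^ 2 + a ^ 2 * ((k : ℝ) + 1) ^ 2 / (4 * u))) : ℝ))
      (Set.Ioi (0 : ℝ))) ∧
    Summable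
      (fun k : ℕ => ∫ u in Set.Ioi (0 : ℝ), (u : ℂ) ^ (s - 3 / 2) *
        (Real.exp (-(u * t ^ 2 + a ^ 2 * ((k : ℝ) + 1) ^ 2 / (4 * u))) : ℝ)) ∧
    (t : ℂ) ^ (-2 * s) +
        2 * ∑' k : ℕ,
          ((((2 * π * ((k : ℝ) + 1) / a) ^ 2 + t ^ 2 : ℝ) : ℂ)) ^ (-s) =
      ((a : ℂ) * Complex.Gamma (s - 1 / 2) /
          (2 * (Real.sqrt π : ℂ) * Complex.Gamma s)) * (t : ℂ) ^ (1 - 2 * s) +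
        ((a : ℂ) / ((Real.sqrt π : ℂ) * Complex.Gamma s)) *
          ∑' k : ℕ, ∫ u in Set.Ioi (0 : ℝ), (u : ℂ) ^ (s - 3 / 2) *
            (Real.exp (-(u * t ^ 2 + a ^ 2 * ((k : ℝ) + 1) ^ 2 / (4 * u))) : ℝ) := by
  have hπ := Real.pi_pos
  have ha' : a ≠ 0 := ha.ne'
  have hΓs : Complex.Gamma s ≠ 0 := by
    apply Complex.Gamma_ne_zero
    intro m h
    rw [h] at hs
    simp only [Complex.neg_re, Complex.natCast_re] at hs
    linarith [Nat.cast_nonneg (α := ℝ) m]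
  have hsπ : ((Real.sqrt π : ℝ):ℂ) ≠ 0 :=
    Complex.ofReal_ne_zero.mpr (by positivity)
  refine ⟨SZ.conj1 ha ht hs, fun k => SZ.H_int ht hs (by positivity),
    SZ.conj3 ha ht hs, ?_⟩
  set G : ℤ → ℝ → ℂ := fun n u =>
    (u:ℂ)^(s-1) * ((rexp (-((t^2+(2*π/a)^2*(n:ℝ)^2)*u)) : ℝ):ℂ) with hG
  set H : ℤ → ℝ → ℂ := fun n u =>
    (u:ℂ)^(s-3/2) * ((rexp (-(u*t^2 + a^2*(n:ℝ)^2/(4*u))) : ℝ):ℂ) with hH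
  have hGint : ∀ n : ℤ, Integrable (G n) (volume.restrict (Set.Ioi 0)) := fun n =>
    SZ.integrable_cpow_exp
      (by rw [Complex.sub_re, Complex.one_re]; linarith) (by positivity)
  have hHint : ∀ n : ℤ, Integrable (H n) (volume.restrict (Set.Ioi 0)) := fun n =>
    SZ.H_int ht hs (by positivity)
  have swapG : ∑' n : ℤ, ∫ u in Set.Ioi (0:ℝ), G n u
      = ∫ u in Set.Ioi (0:ℝ), ∑' n : ℤ, G n u :=
    integral_tsum_of_summable_integral_norm hGint (SZ.G_summable_norm ha ht hs)
  have swapH : ∑' n : ℤ, ∫ u in Set.Ioi (0:ℝ), H n u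
      = ∫ u in Set.Ioi (0:ℝ), ∑' n : ℤ, H n u :=
    integral_tsum_of_summable_integral_norm hHint (SZ.H_summable_norm ha ht hs)
  have key : ∑' n : ℤ, ∫ u in Set.Ioi (0:ℝ), G n u
      = ((a/(2*Real.sqrt π) : ℝ):ℂ) * ∑' n : ℤ, ∫ u in Set.Ioi (0:ℝ), H n u := by
    rw [swapG, swapH,
      show (∫ u in Set.Ioi (0:ℝ), ∑' n : ℤ, G n u)
        = ∫ u in Set.Ioi (0:ℝ), ((a/(2*Real.sqrt π) : ℝ):ℂ) * ∑' n : ℤ, H n u from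
        setIntegral_congr_fun measurableSet_Ioi fun u hu =>
          SZ.pointwise ha ht s (Set.mem_Ioi.mp hu)]
    exact integral_const_mul _ _
  have hGsum : Summable (fun n : ℤ => ∫ u in Set.Ioi (0:ℝ), G n u) :=
    Summable.of_norm_bounded (SZ.G_summable_norm ha ht hs)
      (fun n => norm_integral_le_integral_norm _)
  have hHsum : Summable (fun n : ℤ => ∫ u in Set.Ioi (0:ℝ), H n u) :=
    Summable.of_norm_bounded (SZ.H_summable_norm ha ht hs)
      (fun n => norm_integral_le_integral_norm _)
  have hGev : ∀ n : ℤ, (fun n : ℤ => ∫ u in Set.Ioi (0:ℝ), G n u) (-n)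
      = (fun n : ℤ => ∫ u in Set.Ioi (0:ℝ), G n u) n := by
    intro n; simp only [hG, Int.cast_neg, neg_sq]
  have hHev : ∀ n : ℤ, (fun n : ℤ => ∫ u in Set.Ioi (0:ℝ), H n u) (-n)
      = (fun n : ℤ => ∫ u in Set.Ioi (0:ℝ), H n u) n := by
    intro n; simp only [hH, Int.cast_neg, neg_sq]
  have splitG := SZ.int_even_split hGev hGsum
  have splitH := SZ.int_even_split hHev hHsum
  have hG0 : (∫ u in Set.Ioi (0:ℝ), G (0:ℤ) u) = (t:ℂ)^(-2*s) * Complex.Gamma s := by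
    have h := SZ.G_value ha ht hs 0
    simp only [Int.cast_zero, ne_eq, OfNat.ofNat_ne_zero, not_false_eq_true, zero_pow,
      mul_zero, add_zero] at h
    rw [hG]
    simp only [Int.cast_zero, ne_eq, OfNat.ofNat_ne_zero, not_false_eq_true, zero_pow,
      mul_zero, add_zero]
    rw [h, SZ.one_div_sq_cpow ht s]
    congr 2
    ring
  have hH0 : (∫ u in Set.Ioi (0:ℝ), H (0:ℤ) u)
      = (t:ℂ)^(1-2*s) * Complex.Gamma (s-1/2) := by
    have h := SZ.H_value0 (a := a) ht hs
    rw [hH]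
    simp only [Int.cast_zero]
    rw [h, SZ.one_div_sq_cpow ht (s-1/2)]
    congr 2
    ring
  have hGk : ∀ k : ℕ, (∫ u in Set.Ioi (0:ℝ), G ((k:ℤ)+1) u)
      = ((((2 * π * ((k : ℝ) + 1) / a) ^ 2 + t ^ 2 : ℝ) : ℂ)) ^ (-s)
          * Complex.Gamma s := by
    intro k
    have hpos : (0:ℝ) < t^2+(2*π/a)^2*((((k:ℤ)+1) : ℤ):ℝ)^2 := by positivity
    rw [hG, SZ.G_value ha ht hs ((k:ℤ)+1), SZ.one_div_cpow hpos s]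
    congr 3
    push_cast
    field_simp
    ring
  have hHk : ∀ k : ℕ, (∫ u in Set.Ioi (0:ℝ), H ((k:ℤ)+1) u)
      = ∫ u in Set.Ioi (0 : ℝ), (u : ℂ) ^ (s - 3 / 2) *
          (Real.exp (-(u * t ^ 2 + a ^ 2 * ((k : ℝ) + 1) ^ 2 / (4 * u))) : ℝ) := by
    intro k
    have hc : ((((k:ℤ)+1) : ℤ):ℝ) = (k:ℝ)+1 := by push_cast; ring
    rw [hH]
    simp only [hc]
  have hsumG : ∑' k : ℕ, (∫ u in Set.Ioi (0:ℝ), G ((k:ℤ)+1) u)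
      = (∑' k : ℕ, ((((2 * π * ((k : ℝ) + 1) / a) ^ 2 + t ^ 2 : ℝ) : ℂ)) ^ (-s))
          * Complex.Gamma s := by
    rw [← tsum_mul_right]
    exact tsum_congr hGk
  have hsumH : ∑' k : ℕ, (∫ u in Set.Ioi (0:ℝ), H ((k:ℤ)+1) u)
      = ∑' k : ℕ, ∫ u in Set.Ioi (0 : ℝ), (u : ℂ) ^ (s - 3 / 2) *
          (Real.exp (-(u * t ^ 2 + a ^ 2 * ((k : ℝ) + 1) ^ 2 / (4 * u))) : ℝ) :=
    tsum_congr hHk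
  have key2 : ((t : ℂ) ^ (-2 * s) +
        2 * ∑' k : ℕ,
          ((((2 * π * ((k : ℝ) + 1) / a) ^ 2 + t ^ 2 : ℝ) : ℂ)) ^ (-s))
        * Complex.Gamma s
      = ((a/(2*Real.sqrt π) : ℝ):ℂ) *
          ((t:ℂ)^(1-2*s) * Complex.Gamma (s-1/2) +
            2 * ∑' k : ℕ, ∫ u in Set.Ioi (0 : ℝ), (u : ℂ) ^ (s - 3 / 2) *
              (Real.exp (-(u * t ^ 2 + a ^ 2 * ((k : ℝ) + 1) ^ 2 / (4 * u))) : ℝ)) := by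
    calc ((t : ℂ) ^ (-2 * s) +
        2 * ∑' k : ℕ,
          ((((2 * π * ((k : ℝ) + 1) / a) ^ 2 + t ^ 2 : ℝ) : ℂ)) ^ (-s))
        * Complex.Gamma s
        = (t:ℂ)^(-2*s) * Complex.Gamma s +
            2 * ((∑' k : ℕ,
              ((((2 * π * ((k : ℝ) + 1) / a) ^ 2 + t ^ 2 : ℝ) : ℂ)) ^ (-s))
              * Complex.Gamma s) := by ring
      _ = (∫ u in Set.Ioi (0:ℝ), G (0:ℤ) u) +
            2 * ∑' k : ℕ, (∫ u in Set.Ioi (0:ℝ), G ((k:ℤ)+1) u) := by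
          rw [hG0, hsumG]
      _ = ∑' n : ℤ, ∫ u in Set.Ioi (0:ℝ), G n u := splitG.symm
      _ = ((a/(2*Real.sqrt π) : ℝ):ℂ) * ∑' n : ℤ, ∫ u in Set.Ioi (0:ℝ), H n u := key
      _ = ((a/(2*Real.sqrt π) : ℝ):ℂ) *
            ((∫ u in Set.Ioi (0:ℝ), H (0:ℤ) u) +
              2 * ∑' k : ℕ, (∫ u in Set.Ioi (0:ℝ), H ((k:ℤ)+1) u)) := by
          rw [splitH]
      _ = _ := by rw [hH0, hsumH]
  refine mul_right_cancel₀ hΓs ?_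
  rw [key2]
  generalize (∑' k : ℕ, ∫ u in Set.Ioi (0 : ℝ), (u : ℂ) ^ (s - 3 / 2) *
    (Real.exp (-(u * t ^ 2 + a ^ 2 * ((k : ℝ) + 1) ^ 2 / (4 * u))) : ℝ)) = S
  push_cast
  field_simp
end
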